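/- Let U_1, ..., U_r and V_1, ..., V_s be non-zero uniserial right R-modules. If U_1 ⊕ ... ⊕ U_r ≅ V_1 ⊕ ... ⊕ V_s as R-modules, then r = s and there exist two permutations σ, τ of {1,...,r} such that [U_k]_m = [V_{σ(k)}]_m and [U_k]_e = [V_{τ(k)}]_e for every k. -/

import Mathlib

universe u

/-- A module is uniserial if its lattice of submodules is linearly ordered by inclusion. -/
def IsUniserialModule (R M : Type*) [Ring R] [AddCommGroup M] [Module R M] : Prop :=
  ∀ A B : Submodule R M, A ≤ B ∨ B ≤ A

namespace WKS

variable {R : Type u} [Ring R]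

/-- Same monogeny class. -/
def SameMono (R : Type u) [Ring R] (A B : Type u) [AddCommGroup A] [Module R A]
    [AddCommGroup B] [Module R B] : Prop :=
  (∃ f : A →ₗ[R] B, Function.Injective f) ∧ (∃ g : B →ₗ[R] A, Function.Injective g)

/-- Same epigeny class. -/
def SameEpi (R : Type u) [Ring R] (A B : Type u) [AddCommGroup A] [Module R A]
    [AddCommGroup B] [Module R B] : Prop :=
  (∃ f : A →ₗ[R] B, Function.Surjective f) ∧ (∃ g : B →ₗ[R] A, Function.Surjective g)

variable {A B C : Type u} [AddCommGroup A] [Module R A] [AddCommGroup B] [Module R B]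
  [AddCommGroup C] [Module R C]

lemma SameMono.trans (h1 : SameMono R A B) (h2 : SameMono R B C) : SameMono R A C := by
  obtain ⟨⟨f1, hf1⟩, ⟨g1, hg1⟩⟩ := h1
  obtain ⟨⟨f2, hf2⟩, ⟨g2, hg2⟩⟩ := h2
  exact ⟨⟨f2.comp f1, hf2.comp hf1⟩, ⟨g1.comp g2, hg1.comp hg2⟩⟩

lemma SameEpi.trans (h1 : SameEpi R A B) (h2 : SameEpi R B C) : SameEpi R A C := by
  obtain ⟨⟨f1, hf1⟩, ⟨g1, hg1⟩⟩ := h1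
  obtain ⟨⟨f2, hf2⟩, ⟨g2, hg2⟩⟩ := h2
  exact ⟨⟨f2.comp f1, hf2.comp hf1⟩, ⟨g1.comp g2, hg1.comp hg2⟩⟩

section Chain

variable {M : Type u} [AddCommGroup M] [Module R M]

lemma exists_min {ι : Type} [Fintype ι] [Nonempty ι] (h : IsUniserialModule R M)
    (p : ι → Submodule R M) : ∃ i, ∀ j, p i ≤ p j := by
  have : ∀ t : Finset ι, t.Nonempty → ∃ i ∈ t, ∀ j ∈ t, p i ≤ p j := by
    intro t
    induction t using Finset.cons_induction with
    | empty => intro ht; simp at ht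
    | cons a s ha ih =>
      intro _
      rcases s.eq_empty_or_nonempty with rfl | hs'
      · exact ⟨a, by simp, by simp⟩
      · obtain ⟨i, hi, hmin⟩ := ih hs'
        rcases h (p a) (p i) with hle | hle
        · refine ⟨a, Finset.mem_cons_self a s, ?_⟩
          intro j hj
          rcases Finset.mem_cons.1 hj with rfl | hj
          · exact le_rfl
          · exact hle.trans (hmin j hj)
        · refine ⟨i, Finset.mem_cons.2 (Or.inr hi), ?_⟩
          intro j hj
          rcases Finset.mem_cons.1 hj with rfl | hj
          · exact hle
          · exact hmin j hj
  obtain ⟨i, _, hi⟩ := this Finset.univ Finset.univ_nonempty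
  exact ⟨i, fun j => hi j (Finset.mem_univ j)⟩

lemma exists_max {ι : Type} [Fintype ι] [Nonempty ι] (h : IsUniserialModule R M)
    (p : ι → Submodule R M) : ∃ i, ∀ j, p j ≤ p i := by
  have : ∀ t : Finset ι, t.Nonempty → ∃ i ∈ t, ∀ j ∈ t, p j ≤ p i := by
    intro t
    induction t using Finset.cons_induction with
    | empty => intro ht; simp at ht
    | cons a s ha ih =>
      intro _
      rcases s.eq_empty_or_nonempty with rfl | hs'
      · exact ⟨a, by simp, by simp⟩
      · obtain ⟨i, hi, hmax⟩ := ih hs'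
        rcases h (p a) (p i) with hle | hle
        · refine ⟨i, Finset.mem_cons.2 (Or.inr hi), ?_⟩
          intro j hj
          rcases Finset.mem_cons.1 hj with rfl | hj
          · exact hle
          · exact hmax j hj
        · refine ⟨a, Finset.mem_cons_self a s, ?_⟩
          intro j hj
          rcases Finset.mem_cons.1 hj with rfl | hj
          · exact le_rfl
          · exact (hmax j hj).trans hle
  obtain ⟨i, _, hi⟩ := this Finset.univ Finset.univ_nonempty
  exact ⟨i, fun j => hi j (Finset.mem_univ j)⟩

lemma inf_eq_bot_cases (h : IsUniserialModule R M) {P Q : Submodule R M}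
    (hpq : P ⊓ Q = ⊥) : P = ⊥ ∨ Q = ⊥ := by
  rcases h P Q with hle | hle
  · left; rw [← hpq]; exact le_antisymm (le_inf le_rfl hle) inf_le_left
  · right; rw [← hpq]; exact le_antisymm (le_inf hle le_rfl) inf_le_right

lemma sup_eq_top_cases (h : IsUniserialModule R M) {P Q : Submodule R M}
    (hpq : P ⊔ Q = ⊤) : P = ⊤ ∨ Q = ⊤ := by
  rcases h P Q with hle | hle
  · right; rw [← hpq]; exact (sup_eq_right.2 hle).symm
  · left; rw [← hpq]; exact (sup_eq_left.2 hle).symm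

end Chain

lemma uniserial_of_injective {f : A →ₗ[R] B} (hf : Function.Injective f)
    (hB : IsUniserialModule R B) : IsUniserialModule R A := by
  intro P Q
  rcases hB (P.map f) (Q.map f) with hle | hle
  · exact Or.inl ((Submodule.map_le_map_iff_of_injective hf P Q).1 hle)
  · exact Or.inr ((Submodule.map_le_map_iff_of_injective hf Q P).1 hle)

/-- If `g ∘ f` is injective and the target of `f` is uniserial, both `f` and `g`
(restricted appropriately) are injective. -/
lemma inj_of_comp_inj (hA : Nontrivial A) (hB : IsUniserialModule R B)
    {f : A →ₗ[R] B} {g : B →ₗ[R] A} (hgf : Function.Injective (g.comp f)) :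
    Function.Injective f ∧ Function.Injective g := by
  constructor
  · intro x y hxy
    exact hgf (by simp [LinearMap.comp_apply, hxy])
  · rw [← LinearMap.ker_eq_bot]
    rcases hB (LinearMap.ker g) (LinearMap.range f) with hle | hle
    · apply le_antisymm _ bot_le
      intro x hx
      obtain ⟨a, rfl⟩ := hle hx
      have : g.comp f a = 0 := hx
      have ha : a = 0 := by
        apply hgf; simpa using this
      simp [ha]
    · exfalso
      obtain ⟨a, ha⟩ := exists_ne (0 : A)
      have : g (f a) = 0 := hle ⟨a, rfl⟩
      exact ha (hgf (by simpa using this))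

lemma surj_of_comp_surj (hA : Nontrivial A) (hB : IsUniserialModule R B)
    {f : A →ₗ[R] B} {g : B →ₗ[R] A} (hgf : Function.Surjective (g.comp f)) :
    Function.Surjective f ∧ Function.Surjective g := by
  have hg : Function.Surjective g := by
    intro a; obtain ⟨x, hx⟩ := hgf a; exact ⟨f x, hx⟩
  refine ⟨?_, hg⟩
  rw [← LinearMap.range_eq_top]
  have hsup : LinearMap.range f ⊔ LinearMap.ker g = ⊤ := by
    rw [eq_top_iff]
    intro v _
    obtain ⟨a, ha⟩ := hgf (g v)
    have : v - f a ∈ LinearMap.ker g := by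
      simp only [LinearMap.mem_ker, map_sub]
      have : g (f a) = g v := ha
      rw [this, sub_self]
    have hv : v = f a + (v - f a) := by abel
    rw [hv]
    exact Submodule.add_mem_sup (LinearMap.mem_range_self f a) this
  rcases hB (LinearMap.range f) (LinearMap.ker g) with hle | hle
  · exfalso
    obtain ⟨a, ha⟩ := exists_ne (0 : A)
    obtain ⟨x, hx⟩ := hgf a
    have : g (f x) ∈ (⊥ : Submodule R A) := by
      have : f x ∈ LinearMap.ker g := hle ⟨x, rfl⟩
      simpa using this
    have : a = 0 := by rw [← hx]; simpa using this
    exact ha this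
  · rw [← hsup, sup_eq_left.2 hle]

/-- mono + epi with the mono non-epi and the epi non-mono sums to an isomorphism. -/
lemma bijective_add (hA : IsUniserialModule R A) (hB : IsUniserialModule R B)
    {f g : A →ₗ[R] B} (hf : Function.Injective f) (hg : Function.Surjective g)
    (hnf : ¬ Function.Surjective f) (hng : ¬ Function.Injective g) :
    Function.Bijective (f + g) := by
  constructor
  · rw [← LinearMap.ker_eq_bot]
    have hinf : LinearMap.ker (f + g) ⊓ LinearMap.ker g = ⊥ := by
      apply le_antisymm _ bot_le
      intro x hx
      rw [Submodule.mem_inf] at hx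
      have h1 : f x + g x = 0 := hx.1
      have h2 : g x = 0 := hx.2
      rw [h2, add_zero] at h1
      have hx0 : x = 0 := by
        apply hf; rw [h1, map_zero]
      simp [hx0]
    rcases hA (LinearMap.ker (f + g)) (LinearMap.ker g) with hle | hle
    · rw [← hinf]; exact (inf_eq_left.2 hle).symm
    · exfalso
      apply hng
      rw [← LinearMap.ker_eq_bot, ← hinf]
      exact (inf_eq_right.2 hle).symm
  · rw [← LinearMap.range_eq_top]
    have hsup : LinearMap.range (f + g) ⊔ LinearMap.range f = ⊤ := by
      rw [eq_top_iff]
      intro v _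
      obtain ⟨u, hu⟩ := hg v
      have : v = (f + g) u + (-(f u)) := by
        simp only [LinearMap.add_apply]
        rw [← hu]; abel
      rw [this]
      exact Submodule.add_mem_sup (LinearMap.mem_range_self _ u)
        (Submodule.neg_mem _ (LinearMap.mem_range_self f u))
    rcases hB (LinearMap.range (f + g)) (LinearMap.range f) with hle | hle
    · exfalso
      apply hnf
      rw [← LinearMap.range_eq_top, ← hsup]
      exact (sup_eq_right.2 hle).symm
    · rw [← hsup]; exact (sup_eq_left.2 hle).symm

/-- Same monogeny and epigeny class implies isomorphic (for uniserial modules). -/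
lemma iso_of_classes (hA : IsUniserialModule R A) (hB : IsUniserialModule R B)
    (hm : SameMono R A B) (he : SameEpi R A B) : Nonempty (A ≃ₗ[R] B) := by
  obtain ⟨⟨f, hf⟩, -⟩ := hm
  obtain ⟨⟨g, hg⟩, -⟩ := he
  by_cases hfs : Function.Surjective f
  · exact ⟨LinearEquiv.ofBijective f ⟨hf, hfs⟩⟩
  by_cases hgi : Function.Injective g
  · exact ⟨LinearEquiv.ofBijective g ⟨hgi, hg⟩⟩
  exact ⟨LinearEquiv.ofBijective (f + g) (bijective_add hA hB hf hg hfs hgi)⟩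

section SumSR1

variable {M X Y : Type u} [AddCommGroup M] [Module R M]
  [AddCommGroup X] [Module R X] [AddCommGroup Y] [Module R Y]

/-- If a finite sum of endomorphisms is the identity on a nontrivial uniserial module,
one of them is injective and one of them is surjective. -/
lemma sum_eq_id (hM : IsUniserialModule R M) (hMnt : Nontrivial M)
    {n : ℕ} [NeZero n] {F : Fin n → (M →ₗ[R] M)}
    (hsum : ∑ l, F l = LinearMap.id) :
    (∃ l, Function.Injective (F l)) ∧ (∃ l, Function.Surjective (F l)) := by
  have : Nonempty (Fin n) := ⟨⟨0, Nat.pos_of_ne_zero (NeZero.ne n)⟩⟩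
  constructor
  · obtain ⟨i, hi⟩ := exists_min hM (fun l => LinearMap.ker (F l))
    refine ⟨i, ?_⟩
    rw [← LinearMap.ker_eq_bot]
    apply le_antisymm _ bot_le
    intro x hx
    have hxall : ∀ l, F l x = 0 := fun l => hi l hx
    have : (∑ l, F l) x = 0 := by
      rw [LinearMap.sum_apply]
      exact Finset.sum_eq_zero fun l _ => hxall l
    rw [hsum] at this
    simpa using this
  · obtain ⟨i, hi⟩ := exists_max hM (fun l => LinearMap.range (F l))
    refine ⟨i, ?_⟩
    rw [← LinearMap.range_eq_top]
    rw [eq_top_iff]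
    intro x _
    have : (∑ l, F l) x = x := by rw [hsum]; rfl
    rw [← this, LinearMap.sum_apply]
    exact Submodule.sum_mem _ fun l _ => hi l (LinearMap.mem_range_self (F l) x)

/-- Stable range one for the endomorphisms of a nontrivial uniserial module. -/
lemma stable_range_one (hM : IsUniserialModule R M) (hMnt : Nontrivial M)
    {a b a' : M →ₗ[R] M} (h : a'.comp a + b = LinearMap.id) :
    ∃ y : M →ₗ[R] M, Function.Bijective (a + y.comp b) := by
  classical
  -- helper facts
  have key1 : Function.Injective (a'.comp a) ∨ Function.Injective b := by
    by_contra hcon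
    push_neg at hcon
    obtain ⟨h1, h2⟩ := hcon
    have hk1 : LinearMap.ker (a'.comp a) ≠ ⊥ := fun hh => h1 (LinearMap.ker_eq_bot.1 hh)
    have hk2 : LinearMap.ker b ≠ ⊥ := fun hh => h2 (LinearMap.ker_eq_bot.1 hh)
    have hinf : LinearMap.ker (a'.comp a) ⊓ LinearMap.ker b = ⊥ := by
      apply le_antisymm _ bot_le
      intro x hx
      rw [Submodule.mem_inf] at hx
      have : (a'.comp a + b) x = 0 := by
        simp only [LinearMap.add_apply]
        rw [hx.1, hx.2, add_zero]
      rw [h] at this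
      simpa using this
    rcases inf_eq_bot_cases hM hinf with hh | hh
    · exact hk1 hh
    · exact hk2 hh
  have key2 : Function.Surjective (a'.comp a) ∨ Function.Surjective b := by
    by_contra hcon
    push_neg at hcon
    obtain ⟨h1, h2⟩ := hcon
    have hsup : LinearMap.range (a'.comp a) ⊔ LinearMap.range b = ⊤ := by
      rw [eq_top_iff]
      intro x _
      have : x = (a'.comp a) x + b x := by
        conv_lhs => rw [show x = (a'.comp a + b) x by rw [h]; rfl]
        rfl
      rw [this]
      exact Submodule.add_mem_sup (LinearMap.mem_range_self _ x) (LinearMap.mem_range_self _ x)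
    rcases sup_eq_top_cases hM hsup with hh | hh
    · exact h1 (LinearMap.range_eq_top.1 hh)
    · exact h2 (LinearMap.range_eq_top.1 hh)
  by_cases hai : Function.Injective a
  · by_cases has : Function.Surjective a
    · refine ⟨0, ?_⟩
      have : (0 : M →ₗ[R] M).comp b = 0 := by ext x; simp
      rw [this, add_zero]
      exact ⟨hai, has⟩
    · -- a mono not epi ⇒ b is surjective
      have hbsurj : Function.Surjective b := by
        rcases key2 with hh | hh
        · exact absurd (surj_of_comp_surj hMnt hM hh).1 has
        · exact hh
      by_cases hbi : Function.Injective b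
      · -- b bijective
        set be := LinearEquiv.ofBijective b ⟨hbi, hbsurj⟩
        refine ⟨(LinearMap.id - a).comp (be.symm : M →ₗ[R] M), ?_⟩
        have : a + ((LinearMap.id - a).comp (be.symm : M →ₗ[R] M)).comp b = LinearMap.id := by
          ext x
          simp only [LinearMap.add_apply, LinearMap.comp_apply, LinearMap.sub_apply,
            LinearMap.id_apply]
          have hbx : (be.symm : M →ₗ[R] M) (b x) = x := be.symm_apply_apply x
          rw [hbx]
          abel
        rw [this]
        exact Function.bijective_id
      · refine ⟨LinearMap.id, ?_⟩
        have : LinearMap.id.comp b = b := by ext x; rfl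
        rw [this]
        exact bijective_add hM hM hai hbsurj has hbi
  · -- a not mono ⇒ a'a not mono ⇒ b mono
    have hbi : Function.Injective b := by
      rcases key1 with hh | hh
      · exfalso
        apply hai
        intro x y hxy
        exact hh (by simp [LinearMap.comp_apply, hxy])
      · exact hh
    by_cases hbs : Function.Surjective b
    · set be := LinearEquiv.ofBijective b ⟨hbi, hbs⟩
      refine ⟨(LinearMap.id - a).comp (be.symm : M →ₗ[R] M), ?_⟩
      have : a + ((LinearMap.id - a).comp (be.symm : M →ₗ[R] M)).comp b = LinearMap.id := by
        ext x
        simp only [LinearMap.add_apply, LinearMap.comp_apply, LinearMap.sub_apply,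
          LinearMap.id_apply]
        have hbx : (be.symm : M →ₗ[R] M) (b x) = x := be.symm_apply_apply x
        rw [hbx]
        abel
      rw [this]
      exact Function.bijective_id
    · have hasurj : Function.Surjective a := by
        rcases key2 with hh | hh
        · exact (surj_of_comp_surj hMnt hM hh).1
        · exact absurd hh hbs
      refine ⟨LinearMap.id, ?_⟩
      have h1 : LinearMap.id.comp b = b := by ext x; rfl
      rw [h1]
      have := bijective_add hM hM hbi hasurj hbs hai
      have hcomm : a + b = b + a := by abel
      rw [hcomm]
      exact this

/-- Evans style cancellation from stable range one. -/
lemma cancellation (hM : IsUniserialModule R M) (hMnt : Nontrivial M)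
    (ψ : (M × X) ≃ₗ[R] (M × Y)) : Nonempty (X ≃ₗ[R] Y) := by
  classical
  set a : M →ₗ[R] M := (LinearMap.fst R M Y).comp ((ψ : M × X →ₗ[R] M × Y).comp (LinearMap.inl R M X)) with ha
  set c : M →ₗ[R] Y := (LinearMap.snd R M Y).comp ((ψ : M × X →ₗ[R] M × Y).comp (LinearMap.inl R M X)) with hc
  set a' : M →ₗ[R] M := (LinearMap.fst R M X).comp ((ψ.symm : M × Y →ₗ[R] M × X).comp (LinearMap.inl R M Y)) with ha'
  set b' : Y →ₗ[R] M := (LinearMap.fst R M X).comp ((ψ.symm : M × Y →ₗ[R] M × X).comp (LinearMap.inr R M Y)) with hb'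
  have hid : a'.comp a + b'.comp c = LinearMap.id := by
    ext m
    show a' (a m) + b' (c m) = m
    have h2 : a' (a m) = (ψ.symm (a m, 0)).1 := rfl
    have h3 : b' (c m) = (ψ.symm (0, c m)).1 := rfl
    rw [h2, h3, ← Prod.fst_add, ← map_add]
    have h4 : ((a m, (0:Y)) + ((0:M), c m)) = ψ (m, 0) := by
      have : ψ (m, (0:X)) = (a m, c m) := rfl
      rw [this]; ext <;> simp
    rw [h4, ψ.symm_apply_apply]
  obtain ⟨y, hy⟩ := stable_range_one hM hMnt hid
  set u : M →ₗ[R] M := a + y.comp (b'.comp c) with hu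
  set ue := LinearEquiv.ofBijective u hy
  -- the modified equivalence φ = α ∘ ψ
  set α : (M × Y) ≃ₗ[R] (M × Y) :=
    { toFun := fun p => (p.1 + y (b' p.2), p.2)
      invFun := fun p => (p.1 - y (b' p.2), p.2)
      map_add' := by
        intro p q
        ext
        · simp only [Prod.fst_add, Prod.snd_add, map_add]; abel
        · rfl
      map_smul' := by
        intro r p
        ext
        · simp only [Prod.smul_fst, Prod.smul_snd, map_smul, RingHom.id_apply, smul_add]
        · rfl
      left_inv := by intro p; ext <;> simp
      right_inv := by intro p; ext <;> simp } with hα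
  set φ : (M × X) ≃ₗ[R] (M × Y) := ψ.trans α with hφ
  have hφ1 : ∀ m : M, (φ (m, 0)).1 = u m := by
    intro m
    simp only [hφ, LinearEquiv.trans_apply, hα, hu]
    simp only [LinearEquiv.coe_mk, LinearMap.add_apply, LinearMap.comp_apply]
    rfl
  set B : X →ₗ[R] M := (LinearMap.fst R M Y).comp ((φ : M × X →ₗ[R] M × Y).comp (LinearMap.inr R M X)) with hB
  have hkey : ∀ (v : M) (x : X), (φ (v, x)).1 = u v + B x := by
    intro v x
    have : (v, x) = (v, (0 : X)) + ((0 : M), x) := by ext <;> simp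
    rw [this, map_add]
    have := hφ1 v
    simp only [Prod.fst_add]
    rw [this]
    rfl
  set χ : X →ₗ[R] Y := (LinearMap.snd R M Y).comp
    (((φ : M × X →ₗ[R] M × Y).comp
      (LinearMap.prod (-(((ue.symm : M ≃ₗ[R] M) : M →ₗ[R] M).comp B)) LinearMap.id))) with hχ
  have hχ_apply : ∀ x : X, χ x = (φ (-(ue.symm (B x)), x)).2 := fun x => rfl
  have hfirst : ∀ x : X, (φ (-(ue.symm (B x)), x)).1 = 0 := by
    intro x
    rw [hkey]
    have : u (-(ue.symm (B x))) = -(B x) := by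
      rw [map_neg]
      congr 1
      exact ue.apply_symm_apply (B x)
    rw [this]
    abel
  constructor
  refine LinearEquiv.ofBijective χ ⟨?_, ?_⟩
  · rw [← LinearMap.ker_eq_bot]
    apply le_antisymm _ bot_le
    intro x hx
    have hx2 : (φ (-(ue.symm (B x)), x)).2 = 0 := hx
    have hx1 := hfirst x
    have : φ (-(ue.symm (B x)), x) = 0 := by
      ext
      · rw [hx1]; rfl
      · rw [hx2]; rfl
    have h0 : (-(ue.symm (B x)), x) = (0 : M × X) := by
      apply φ.injective
      rw [this, map_zero]
    have : x = 0 := congrArg Prod.snd h0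
    simpa using this
  · intro yv
    obtain ⟨⟨v, x⟩, hvx⟩ := φ.surjective (0, yv)
    have h1 : u v + B x = 0 := by
      have := hkey v x
      rw [hvx] at this
      exact this.symm
    have hv : v = -(ue.symm (B x)) := by
      apply hy.1
      show u v = u (-(ue.symm (B x)))
      rw [map_neg]
      have h2 : u (ue.symm (B x)) = B x := ue.apply_symm_apply (B x)
      rw [h2]
      exact eq_neg_of_add_eq_zero_left h1
    refine ⟨x, ?_⟩
    rw [hχ_apply, ← hv, hvx]

end SumSR1

section PiSplit

variable {n : ℕ} (M : Fin (n+1) → Type u) [∀ i, AddCommGroup (M i)] [∀ i, Module R (M i)]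

/-- Split a finite product of modules at an arbitrary index. -/
def piSplit (p : Fin (n+1)) :
    ((∀ i, M i) ≃ₗ[R] M p × (∀ i : Fin n, M (p.succAbove i))) where
  toFun f := (f p, fun i => f (p.succAbove i))
  map_add' f g := rfl
  map_smul' c f := rfl
  invFun x := p.insertNth x.1 x.2
  left_inv f := by
    funext j
    refine Fin.succAboveCases p ?_ (fun i => ?_) j
    · simp
    · simp
  right_inv x := by
    refine Prod.ext ?_ (funext fun i => ?_)
    · simp
    · simp

/-- Split a finite product of modules at zero, the remaining factors indexed by `Fin.succ`. -/
def piSuccSplit :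
    ((∀ i, M i) ≃ₗ[R] M 0 × (∀ i : Fin n, M i.succ)) where
  toFun f := (f 0, fun i => f i.succ)
  map_add' f g := rfl
  map_smul' c f := rfl
  invFun x := Fin.cons x.1 x.2
  left_inv f := by
    funext j
    refine Fin.cases ?_ (fun i => ?_) j
    · rfl
    · rfl
  right_inv x := rfl

end PiSplit

section Replacement

/-- Bundled module, used to state the induction. -/
structure BMod (R : Type u) [Ring R] : Type (u+1) where
  X : Type u
  [ag : AddCommGroup X]
  [mod : Module R X]

attribute [instance] BMod.ag BMod.mod

variable {U V₁ V₂ : Type u} [AddCommGroup U] [Module R U]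
  [AddCommGroup V₁] [Module R V₁] [AddCommGroup V₂] [Module R V₂]

/-- The replacement lemma: if `[U]_m = [V₁]_m` and `[U]_e = [V₂]_e` then
`V₁ ⊕ V₂ ≅ U ⊕ W` for a nonzero uniserial `W` with `[W]_m = [V₂]_m`, `[W]_e = [V₁]_e`. -/
lemma replacement (hU : IsUniserialModule R U) (hUnt : Nontrivial U)
    (hV₁ : IsUniserialModule R V₁) (hV₁nt : Nontrivial V₁)
    (hV₂ : IsUniserialModule R V₂) (hV₂nt : Nontrivial V₂)
    {f : U →ₗ[R] V₁} (hf : Function.Injective f)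
    {f' : V₁ →ₗ[R] U} (hf' : Function.Injective f')
    {g : U →ₗ[R] V₂} (hg : Function.Surjective g)
    {g' : V₂ →ₗ[R] U} (hg' : Function.Surjective g') :
    ∃ W : BMod R, Nonempty ((V₁ × V₂) ≃ₗ[R] U × W.X) ∧ Nontrivial W.X ∧
      IsUniserialModule R W.X ∧ SameMono R W.X V₂ ∧ SameEpi R W.X V₁ := by
  classical
  by_cases hcase1 : Function.Surjective (f'.comp f)
  · -- f' is bijective, so V₁ ≅ U and W = V₂
    have hf's : Function.Surjective f' := (surj_of_comp_surj hUnt hV₁ hcase1).2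
    have f'e : V₁ ≃ₗ[R] U := LinearEquiv.ofBijective f' ⟨hf', hf's⟩
    refine ⟨⟨V₂⟩, ⟨LinearEquiv.prodCongr f'e (LinearEquiv.refl R V₂)⟩, hV₂nt, hV₂,
      ⟨⟨LinearMap.id, fun a b h => h⟩, ⟨LinearMap.id, fun a b h => h⟩⟩, ?_, ?_⟩
    · -- epi V₂ → V₁ :  f'e.symm ∘ g'
      refine ⟨(f'e.symm : U →ₗ[R] V₁).comp g', ?_⟩
      exact f'e.symm.surjective.comp hg'
    · -- epi V₁ → V₂ : g ∘ f'
      exact ⟨g.comp f', hg.comp hf's⟩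
  by_cases hcase2 : Function.Injective (g'.comp g)
  · -- g is bijective, so U ≅ V₂ and W = V₁
    have hgi : Function.Injective g := fun a b h => hcase2 (by simp [LinearMap.comp_apply, h])
    have ge : U ≃ₗ[R] V₂ := LinearEquiv.ofBijective g ⟨hgi, hg⟩
    refine ⟨⟨V₁⟩, ⟨(LinearEquiv.prodCongr (LinearEquiv.refl R V₁) ge.symm).trans
      (LinearEquiv.prodComm R V₁ U)⟩, hV₁nt, hV₁, ?_, ?_⟩
    · constructor
      · exact ⟨(ge : U →ₗ[R] V₂).comp f', ge.injective.comp hf'⟩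
      · exact ⟨f.comp (ge.symm : V₂ →ₗ[R] U), hf.comp ge.symm.injective⟩
    · exact ⟨⟨LinearMap.id, fun a => ⟨a, rfl⟩⟩, ⟨LinearMap.id, fun a => ⟨a, rfl⟩⟩⟩
  · -- main case
    set ψ : V₁ × V₂ →ₗ[R] U :=
      f'.comp (LinearMap.fst R V₁ V₂) + g'.comp (LinearMap.snd R V₁ V₂) with hψ
    set φ : U →ₗ[R] V₁ × V₂ := LinearMap.prod f g with hφdef
    have hψφ : ψ.comp φ = f'.comp f + g'.comp g := by
      ext x; rfl
    have hbij : Function.Bijective (f'.comp f + g'.comp g) :=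
      bijective_add hU hU (hf'.comp hf) (hg'.comp hg) hcase1 hcase2
    set he := LinearEquiv.ofBijective (f'.comp f + g'.comp g) hbij with hhe
    set φ' : U →ₗ[R] V₁ × V₂ := φ.comp (he.symm : U →ₗ[R] U) with hφ'
    have hσ : ∀ u : U, ψ (φ' u) = u := by
      intro u
      have h1 : ψ (φ (he.symm u)) = (ψ.comp φ) (he.symm u) := rfl
      show ψ (φ (he.symm u)) = u
      rw [h1, hψφ]
      exact he.apply_symm_apply u
    set W := LinearMap.ker ψ with hW
    -- q : projection onto W along the image of φ'
    set q : V₁ × V₂ →ₗ[R] V₁ × V₂ := LinearMap.id - φ'.comp ψ with hq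
    have hqmem : ∀ v, q v ∈ W := by
      intro v
      show ψ (v - φ' (ψ v)) = 0
      rw [map_sub, hσ, sub_self]
    set p : V₁ × V₂ →ₗ[R] W := LinearMap.codRestrict W q hqmem with hp
    -- the equivalence V₁ × V₂ ≅ U × W
    set ρ : U × W →ₗ[R] V₁ × V₂ :=
      φ'.comp (LinearMap.fst R U W) + W.subtype.comp (LinearMap.snd R U W) with hρ
    have hρ_apply : ∀ (u : U) (w : W), ρ (u, w) = φ' u + (w : V₁ × V₂) := fun u w => rfl
    have hρbij : Function.Bijective ρ := by
      constructor
      · intro x y hxy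
        obtain ⟨u1, w1⟩ := x
        obtain ⟨u2, w2⟩ := y
        rw [hρ_apply, hρ_apply] at hxy
        have h1 : u1 = u2 := by
          have := congrArg ψ hxy
          rw [map_add, map_add, hσ, hσ, w1.2, w2.2, add_zero, add_zero] at this
          exact this
        subst h1
        have h2 : (w1 : V₁ × V₂) = (w2 : V₁ × V₂) := by
          have := hxy
          exact add_left_cancel this
        exact Prod.ext rfl (Subtype.ext h2)
      · intro v
        refine ⟨(ψ v, p v), ?_⟩
        rw [hρ_apply]
        show φ' (ψ v) + (v - φ' (ψ v)) = v
        abel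
    -- the four class maps
    have hm2 : Function.Injective ((LinearMap.snd R V₁ V₂).comp W.subtype) := by
      intro w1 w2 h12
      apply Subtype.ext
      have hsnd : (w1 : V₁ × V₂).2 = (w2 : V₁ × V₂).2 := h12
      have hker1 : f' (w1 : V₁ × V₂).1 + g' (w1 : V₁ × V₂).2 = 0 := w1.2
      have hker2 : f' (w2 : V₁ × V₂).1 + g' (w2 : V₁ × V₂).2 = 0 := w2.2
      have hfst : f' (w1 : V₁ × V₂).1 = f' (w2 : V₁ × V₂).1 := by
        have := hker1.trans hker2.symm
        rw [hsnd] at this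
        exact add_right_cancel this
      exact Prod.ext (hf' hfst) hsnd
    have hWuni : IsUniserialModule R W := uniserial_of_injective hm2 hV₂
    -- mono V₂ → W
    have hμ : Function.Injective (p.comp (LinearMap.inr R V₁ V₂)) := by
      intro v1 v2 h12
      have h12' : q (0, v1) = q (0, v2) := congrArg Subtype.val h12
      have hq1 : ∀ v : V₂, q (0, v) = (0, v) - φ' (g' v) := by
        intro v
        show ((0 : V₁), v) - φ' (ψ (0, v)) = (0, v) - φ' (g' v)
        congr 2
        show f' 0 + g' v = g' v
        rw [map_zero, zero_add]
      rw [hq1, hq1] at h12'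
      -- rearranged: (0, v1 - v2) = φ' (g' (v1 - v2))
      have h3 : ((0 : V₁), v1 - v2) = φ' (g' (v1 - v2)) := by
        have := sub_eq_zero.2 h12'
        rw [show ((0:V₁), v1) - φ' (g' v1) - (((0:V₁), v2) - φ' (g' v2))
            = (((0:V₁), v1 - v2) : V₁ × V₂) - φ' (g' (v1 - v2)) by
          rw [map_sub g', map_sub φ']
          ext <;> (simp; (try abel))] at this
        exact sub_eq_zero.1 this
      set u0 := he.symm (g' (v1 - v2)) with hu0
      have h4 : ((0 : V₁), v1 - v2) = (f u0, g u0) := h3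
      have h5 : f u0 = 0 := (congrArg Prod.fst h4).symm
      have h6 : u0 = 0 := hf (by rw [h5, map_zero])
      have h7 : v1 - v2 = g u0 := congrArg Prod.snd h4
      rw [h6, map_zero] at h7
      exact sub_eq_zero.1 h7
    -- epi W → V₁
    have hε : Function.Surjective ((LinearMap.fst R V₁ V₂).comp W.subtype) := by
      intro v₁
      obtain ⟨v₂, hv₂⟩ := hg' (-(f' v₁))
      refine ⟨⟨(v₁, v₂), ?_⟩, rfl⟩
      show f' v₁ + g' v₂ = 0
      rw [hv₂]; abel
    -- epi V₁ → W
    have hε' : Function.Surjective (p.comp (LinearMap.inl R V₁ V₂)) := by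
      rintro ⟨⟨v₁, v₂⟩, hw⟩
      obtain ⟨u, hu⟩ := hg v₂
      refine ⟨v₁ - f u, ?_⟩
      apply Subtype.ext
      show q (v₁ - f u, 0) = (v₁, v₂)
      have hsplit : ((v₁ - f u, (0:V₂)) : V₁ × V₂) = (v₁, v₂) - φ u := by
        ext
        · rfl
        · show (0 : V₂) = v₂ - g u
          rw [hu, sub_self]
      rw [hsplit, map_sub]
      have hqφ : q (φ u) = 0 := by
        show φ u - φ' (ψ (φ u)) = 0
        have h1 : ψ (φ u) = (f'.comp f + g'.comp g) u := rfl
        rw [h1]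
        have h2 : φ' ((f'.comp f + g'.comp g) u) = φ u := by
          show φ (he.symm ((f'.comp f + g'.comp g) u)) = φ u
          rw [show he.symm ((f'.comp f + g'.comp g) u) = u from he.symm_apply_apply u]
        rw [h2, sub_self]
      have hqw : q (v₁, v₂) = (v₁, v₂) := by
        show ((v₁, v₂) : V₁ × V₂) - φ' (ψ (v₁, v₂)) = (v₁, v₂)
        have : ψ (v₁, v₂) = 0 := hw
        rw [this, map_zero, sub_zero]
      rw [hqφ, hqw, sub_zero]
    have hWnt : Nontrivial W := hε.nontrivial
    exact ⟨⟨W⟩, ⟨(LinearEquiv.ofBijective ρ hρbij).symm⟩, hWnt, hWuni,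
      ⟨⟨(LinearMap.snd R V₁ V₂).comp W.subtype, hm2⟩, ⟨p.comp (LinearMap.inr R V₁ V₂), hμ⟩⟩,
      ⟨⟨(LinearMap.fst R V₁ V₂).comp W.subtype, hε⟩, ⟨p.comp (LinearMap.inl R V₁ V₂), hε'⟩⟩⟩

end Replacement

section Partners

lemma fin_cases_injective {n m : ℕ} (a : Fin m) (f : Fin n → Fin m)
    (hfa : ∀ k, f k ≠ a) (hf : Function.Injective f) :
    Function.Injective (Fin.cases a f : Fin (n+1) → Fin m) := by
  have key : ∀ x y : Fin (n+1),
      (Fin.cases a f : Fin (n+1) → Fin m) x = (Fin.cases a f : Fin (n+1) → Fin m) y → x = y := by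
    intro x
    refine Fin.cases ?_ (fun x' => ?_) x
    · intro y
      refine Fin.cases ?_ (fun y' => ?_) y
      · intro _; rfl
      · intro h
        simp only [Fin.cases_zero, Fin.cases_succ] at h
        exact absurd h.symm (hfa y')
    · intro y
      refine Fin.cases ?_ (fun y' => ?_) y
      · intro h
        simp only [Fin.cases_zero, Fin.cases_succ] at h
        exact absurd h (hfa x')
      · intro h
        simp only [Fin.cases_succ] at h
        exact congrArg Fin.succ (hf h)
  exact fun x y h => key x y h

lemma pi_nontrivial {r : ℕ} (U : Fin (r+1) → BMod R) (h : Nontrivial (U 0).X) :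
    Nontrivial (∀ k, (U k).X) := by
  classical
  obtain ⟨u, hu⟩ := exists_ne (0 : (U 0).X)
  refine ⟨Pi.single 0 u, 0, fun hcon => hu ?_⟩
  have := congrFun hcon 0
  simpa using this

lemma exists_partners {r s : ℕ} (U : Fin (r+1) → BMod R) (V : Fin (s+1) → BMod R)
    (hUnt : Nontrivial (U 0).X) (hUuni : IsUniserialModule R (U 0).X)
    (hVuni : ∀ l, IsUniserialModule R (V l).X)
    (e : (∀ k, (U k).X) ≃ₗ[R] ∀ l, (V l).X) :
    (∃ l₁, SameMono R (U 0).X (V l₁).X) ∧ (∃ l₂, SameEpi R (U 0).X (V l₂).X) := by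
  classical
  set ι : (U 0).X →ₗ[R] (∀ k, (U k).X) := LinearMap.single R (fun k => (U k).X) 0 with hι
  set π : (∀ k, (U k).X) →ₗ[R] (U 0).X := LinearMap.proj 0 with hπ
  set f : ∀ l, ((U 0).X →ₗ[R] (V l).X) :=
    fun l => (LinearMap.proj l).comp ((e : (∀ k, (U k).X) →ₗ[R] ∀ l, (V l).X).comp ι) with hfdef
  set g : ∀ l, ((V l).X →ₗ[R] (U 0).X) :=
    fun l => π.comp ((e.symm : (∀ l, (V l).X) →ₗ[R] ∀ k, (U k).X).comp
      (LinearMap.single R (fun l => (V l).X) l)) with hgdef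
  have hsum : (∑ l, (g l).comp (f l)) = LinearMap.id := by
    ext u
    rw [LinearMap.sum_apply, LinearMap.id_apply]
    have hterm : ∀ l, ((g l).comp (f l)) u
        = (e.symm (Pi.single l ((e (Pi.single (0 : Fin (r+1)) u)) l))) 0 := by
      intro l; rfl
    calc ∑ l, ((g l).comp (f l)) u
        = ∑ l, (e.symm (Pi.single l ((e (Pi.single (0 : Fin (r+1)) u)) l))) 0 := by
          exact Finset.sum_congr rfl fun l _ => hterm l
      _ = (∑ l, e.symm (Pi.single l ((e (Pi.single (0 : Fin (r+1)) u)) l))) 0 := by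
          rw [Finset.sum_apply]
      _ = (e.symm (∑ l, Pi.single l ((e (Pi.single (0 : Fin (r+1)) u)) l))) 0 := by
          rw [map_sum]
      _ = (e.symm (e (Pi.single (0 : Fin (r+1)) u))) 0 := by
          rw [Finset.univ_sum_single]
      _ = u := by rw [e.symm_apply_apply]; simp
  obtain ⟨⟨l₁, hinj⟩, ⟨l₂, hsurj⟩⟩ := sum_eq_id hUuni hUnt hsum
  constructor
  · obtain ⟨h1, h2⟩ := inj_of_comp_inj hUnt (hVuni l₁) hinj
    exact ⟨l₁, ⟨⟨f l₁, h1⟩, ⟨g l₁, h2⟩⟩⟩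
  · obtain ⟨h1, h2⟩ := surj_of_comp_surj hUnt (hVuni l₂) hsurj
    exact ⟨l₂, ⟨⟨f l₂, h1⟩, ⟨g l₂, h2⟩⟩⟩

end Partners

/-- The main induction. -/
theorem aux : ∀ (r : ℕ), ∀ (s : ℕ) (U : Fin r → BMod R) (V : Fin s → BMod R),
    (∀ k, Nontrivial (U k).X) → (∀ k, IsUniserialModule R (U k).X) →
    (∀ l, Nontrivial (V l).X) → (∀ l, IsUniserialModule R (V l).X) →
    ((∀ k, (U k).X) ≃ₗ[R] ∀ l, (V l).X) →
    r = s ∧ (∃ σ : Fin r ≃ Fin s, ∀ k, SameMono R (U k).X (V (σ k)).X) ∧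
      (∃ τ : Fin r ≃ Fin s, ∀ k, SameEpi R (U k).X (V (τ k)).X) := by
  intro r
  induction r with
  | zero =>
    intro s U V hUnt hUuni hVnt hVuni e
    rcases s with _ | s'
    · exact ⟨rfl, ⟨Equiv.refl _, fun k => k.elim0⟩, ⟨Equiv.refl _, fun k => k.elim0⟩⟩
    · exfalso
      have h1 : Subsingleton (∀ k : Fin 0, (U k).X) := ⟨fun a b => funext fun k => k.elim0⟩
      have h2 : Subsingleton (∀ l : Fin (s'+1), (V l).X) := e.symm.toEquiv.subsingleton
      have h3 := pi_nontrivial V (hVnt 0)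
      exact (not_subsingleton _) h2
  | succ r' IH =>
    intro s U V hUnt hUuni hVnt hVuni e
    rcases s with _ | s₁
    · exfalso
      have h1 : Subsingleton (∀ l : Fin 0, (V l).X) := ⟨fun a b => funext fun l => l.elim0⟩
      have h2 : Subsingleton (∀ k : Fin (r'+1), (U k).X) := e.toEquiv.subsingleton
      have h3 := pi_nontrivial U (hUnt 0)
      exact (not_subsingleton _) h2
    obtain ⟨⟨l₁, hl₁m⟩, ⟨l₂, hl₂e⟩⟩ :=
      exists_partners U V (hUnt 0) (hUuni 0) hVuni e
    by_cases hll : l₁ = l₂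
    · -- U 0 ≅ V l₁ and cancel
      subst hll
      obtain ⟨iso0⟩ := iso_of_classes (hUuni 0) (hVuni l₁) hl₁m hl₂e
      have total : ((U 0).X × (∀ k : Fin r', (U k.succ).X)) ≃ₗ[R]
          ((U 0).X × (∀ i : Fin s₁, (V (l₁.succAbove i)).X)) :=
        ((piSuccSplit (fun k => (U k).X)).symm.trans
          (e.trans (piSplit (fun l => (V l).X) l₁))).trans
          (LinearEquiv.prodCongr iso0.symm (LinearEquiv.refl R _))
      obtain ⟨e'⟩ := cancellation (hUuni 0) (hUnt 0) total
      obtain ⟨hrs, ⟨σ', hσ'⟩, ⟨τ', hτ'⟩⟩ := IH s₁ (fun k => U k.succ)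
        (fun i => V (l₁.succAbove i)) (fun k => hUnt _) (fun k => hUuni _)
        (fun i => hVnt _) (fun i => hVuni _) e'
      refine ⟨by omega, ?_, ?_⟩
      · have hinj : Function.Injective
            (Fin.cases l₁ (fun k => l₁.succAbove (σ' k)) : Fin (r'+1) → Fin (s₁+1)) :=
          fin_cases_injective _ _ (fun k => Fin.succAbove_ne l₁ (σ' k))
            (Fin.succAbove_right_injective.comp σ'.injective)
        refine ⟨Equiv.ofBijective _ ((Fintype.bijective_iff_injective_and_card _).2
          ⟨hinj, by simp [hrs]⟩), ?_⟩
        intro k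
        refine Fin.cases ?_ (fun k' => ?_) k
        · exact hl₁m
        · exact hσ' k'
      · have hinj : Function.Injective
            (Fin.cases l₁ (fun k => l₁.succAbove (τ' k)) : Fin (r'+1) → Fin (s₁+1)) :=
          fin_cases_injective _ _ (fun k => Fin.succAbove_ne l₁ (τ' k))
            (Fin.succAbove_right_injective.comp τ'.injective)
        refine ⟨Equiv.ofBijective _ ((Fintype.bijective_iff_injective_and_card _).2
          ⟨hinj, by simp [hrs]⟩), ?_⟩
        intro k
        refine Fin.cases ?_ (fun k' => ?_) k
        · exact hl₂e
        · exact hτ' k'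
    · -- replacement case
      obtain ⟨j, hj⟩ := Fin.exists_succAbove_eq (Ne.symm hll)
      subst hj
      rcases s₁ with _ | s₂
      · exact j.elim0
      obtain ⟨⟨fm, hfm⟩, ⟨gm, hgm⟩⟩ := id hl₁m
      obtain ⟨⟨fe, hfe⟩, ⟨ge, hge⟩⟩ := id hl₂e
      obtain ⟨W, ⟨eqw⟩, hWnt, hWuni, hWm, hWe⟩ :=
        replacement (hUuni 0) (hUnt 0) (hVuni l₁) (hVnt l₁) (hVuni _) (hVnt _)
          hfm hgm hfe hge
      set G : Fin (s₂+1) → BMod R :=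
        (Fin.cons W (fun i => V (l₁.succAbove (j.succAbove i))) : Fin (s₂+1) → BMod R) with hG
      have step5 : ((W.X × (∀ i : Fin s₂, (V (l₁.succAbove (j.succAbove i))).X))) ≃ₗ[R]
          (∀ i : Fin (s₂+1), (G i).X) := (piSuccSplit (fun i => (G i).X)).symm
      have total : ((U 0).X × (∀ k : Fin r', (U k.succ).X)) ≃ₗ[R]
          ((U 0).X × (∀ i : Fin (s₂+1), (G i).X)) :=
        ((piSuccSplit (fun k => (U k).X)).symm.trans
          ((e.trans ((piSplit (fun l => (V l).X) l₁).trans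
            ((LinearEquiv.refl R _).prodCongr (piSplit (fun i => (V (l₁.succAbove i)).X) j)))).trans
          (((LinearEquiv.prodAssoc R _ _ _).symm.trans
            (eqw.prodCongr (LinearEquiv.refl R _))).trans
          ((LinearEquiv.prodAssoc R _ _ _).trans
            ((LinearEquiv.refl R _).prodCongr step5)))))
      obtain ⟨e'⟩ := cancellation (hUuni 0) (hUnt 0) total
      obtain ⟨hrs, ⟨σ', hσ'⟩, ⟨τ', hτ'⟩⟩ := IH (s₂+1) (fun k => U k.succ) G
        (fun k => hUnt _) (fun k => hUuni _)
        (fun i => Fin.cases (motive := fun i => Nontrivial (G i).X) hWnt (fun i' => hVnt _) i)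
        (fun i => Fin.cases (motive := fun i => IsUniserialModule R (G i).X) hWuni
          (fun i' => hVuni _) i) e'
      have hemb_inj : Function.Injective
          (fun i : Fin s₂ => l₁.succAbove (j.succAbove i)) :=
        Fin.succAbove_right_injective.comp Fin.succAbove_right_injective
      refine ⟨by omega, ?_, ?_⟩
      · -- monogeny permutation
        set slot : Fin (s₂+1) → Fin (s₂+2) :=
          (Fin.cases (l₁.succAbove j) (fun i => l₁.succAbove (j.succAbove i)) :
            Fin (s₂+1) → Fin (s₂+2)) with hslot
        have hslot_ne : ∀ i, slot i ≠ l₁ := by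
          intro i
          refine Fin.cases ?_ (fun i' => ?_) i
          · exact Fin.succAbove_ne l₁ j
          · exact Fin.succAbove_ne l₁ (j.succAbove i')
        have hslot_inj : Function.Injective slot := by
          refine fin_cases_injective _ _ (fun i => ?_) hemb_inj
          intro hcon
          exact Fin.succAbove_ne j i (Fin.succAbove_right_injective hcon)
        have hinj : Function.Injective
            (Fin.cases l₁ (fun k => slot (σ' k)) : Fin (r'+1) → Fin (s₂+2)) :=
          fin_cases_injective _ _ (fun k => hslot_ne (σ' k)) (hslot_inj.comp σ'.injective)
        refine ⟨Equiv.ofBijective _ ((Fintype.bijective_iff_injective_and_card _).2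
          ⟨hinj, by simp [hrs]⟩), ?_⟩
        intro k
        refine Fin.cases ?_ (fun k' => ?_) k
        · exact hl₁m
        · have h := hσ' k'
          rcases Fin.eq_zero_or_eq_succ (σ' k') with h0 | ⟨i, hi⟩
          · rw [h0] at h
            show SameMono R (U k'.succ).X (V (slot (σ' k'))).X
            rw [h0]
            exact SameMono.trans h hWm
          · rw [hi] at h
            show SameMono R (U k'.succ).X (V (slot (σ' k'))).X
            rw [hi]
            exact h
      · -- epigeny permutation
        set slote : Fin (s₂+1) → Fin (s₂+2) :=
          (Fin.cases l₁ (fun i => l₁.succAbove (j.succAbove i)) :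
            Fin (s₂+1) → Fin (s₂+2)) with hslote
        have hslote_ne : ∀ i, slote i ≠ l₁.succAbove j := by
          intro i
          refine Fin.cases ?_ (fun i' => ?_) i
          · exact (Fin.succAbove_ne l₁ j).symm
          · intro hcon
            exact Fin.succAbove_ne j i' (Fin.succAbove_right_injective hcon)
        have hslote_inj : Function.Injective slote := by
          refine fin_cases_injective _ _ (fun i => ?_) hemb_inj
          exact Fin.succAbove_ne l₁ (j.succAbove i)
        have hinj : Function.Injective
            (Fin.cases (l₁.succAbove j) (fun k => slote (τ' k)) : Fin (r'+1) → Fin (s₂+2)) :=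
          fin_cases_injective _ _ (fun k => hslote_ne (τ' k)) (hslote_inj.comp τ'.injective)
        refine ⟨Equiv.ofBijective _ ((Fintype.bijective_iff_injective_and_card _).2
          ⟨hinj, by simp [hrs]⟩), ?_⟩
        intro k
        refine Fin.cases ?_ (fun k' => ?_) k
        · exact hl₂e
        · have h := hτ' k'
          rcases Fin.eq_zero_or_eq_succ (τ' k') with h0 | ⟨i, hi⟩
          · rw [h0] at h
            show SameEpi R (U k'.succ).X (V (slote (τ' k'))).X
            rw [h0]
            exact SameEpi.trans h hWe
          · rw [hi] at h
            show SameEpi R (U k'.succ).X (V (slote (τ' k'))).X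
            rw [hi]
            exact h

end WKS

/-- Weak Krull–Schmidt for uniserial modules: if `U₁ ⊕ ... ⊕ U_r ≅ V₁ ⊕ ... ⊕ V_s`
with all `U_k`, `V_l` non-zero uniserial, then `r = s` and there are two permutations
`σ`, `τ` with `[U_k]_m = [V_{σ k}]_m` and `[U_k]_e = [V_{τ k}]_e` for every `k`. -/
theorem weak_krull_schmidt_uniserial
    {R : Type u} [Ring R] {r s : ℕ}
    (U : Fin r → Type u) [∀ k, AddCommGroup (U k)] [∀ k, Module R (U k)]
    (V : Fin s → Type u) [∀ l, AddCommGroup (V l)] [∀ l, Module R (V l)]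
    (hUnz : ∀ k, Nontrivial (U k)) (hUuni : ∀ k, IsUniserialModule R (U k))
    (hVnz : ∀ l, Nontrivial (V l)) (hVuni : ∀ l, IsUniserialModule R (V l))
    (e : (∀ k, U k) ≃ₗ[R] ∀ l, V l) :
    r = s ∧
    (∃ σ : Fin r ≃ Fin s, ∀ k,
      (∃ f : U k →ₗ[R] V (σ k), Function.Injective f) ∧
      (∃ g : V (σ k) →ₗ[R] U k, Function.Injective g)) ∧
    (∃ τ : Fin r ≃ Fin s, ∀ k,
      (∃ f : U k →ₗ[R] V (τ k), Function.Surjective f) ∧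
      (∃ g : V (τ k) →ₗ[R] U k, Function.Surjective g)) := by
  obtain ⟨hrs, ⟨σ, hσ⟩, ⟨τ, hτ⟩⟩ := WKS.aux r s (fun k => ⟨U k⟩) (fun l => ⟨V l⟩)
    hUnz hUuni hVnz hVuni e
  exact ⟨hrs, ⟨σ, fun k => ⟨(hσ k).1, (hσ k).2⟩⟩, ⟨τ, fun k => ⟨(hτ k).1, (hτ k).2⟩⟩⟩
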